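/- (Linear Volterra equation for the time-dependent strike, general m.) Fix m ∈ ℝ, set γ = m + r − σ²/2 and b(t) = K_T·e^{−γ(T−t)}. Let K : [0,T] → ℝ be continuous with K(T) = K_T, continuously differentiable on [0,T), and such that u ↦ e^{−ru}·K′(u) is integrable on (0,T). Then the following are equivalent: (i) for every t ∈ [0,T), K(t) − b(t) = V^e(t, b(t)) + ∫_t^T e^{−r(u−t)}·(r·K(u) − K′(u))·N((m/σ)·√(u−t)) du; (ii) for every t ∈ [0,T), K(t) = 2·K_T·e^{−(m + r − σ²/2)(T−t)}·N(−(m/σ − σ)·√(T−t)) + (m/(σ·√(2π)))·∫_t^T e^{−(r + m²/(2σ²))(u−t)}·K(u)·(u−t)^{−1/2} du. Here V^e(t,x) = K_T·e^{−r(T−t)}·N( (log(K_T/x) − (r − σ²/2)(T−t)) / (σ√(T−t)) ) − x·N( (log(K_T/x) − (r + σ²/2)(T−t)) / (σ√(T−t)) ) for x > 0. -/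

import Mathlib

open MeasureTheory Real Set Filter

/-- Standard normal cdf `N(x)`. -/
noncomputable def stdCdf (x : ℝ) : ℝ := ∫ y in Set.Iic x, Real.exp (-y ^ 2 / 2) / Real.sqrt (2 * Real.pi)

noncomputable def stdPdf (y : ℝ) : ℝ := Real.exp (-y ^ 2 / 2) / Real.sqrt (2 * Real.pi)

lemma stdPdf_continuous : Continuous stdPdf := by
  unfold stdPdf
  fun_prop

lemma stdPdf_nonneg (y : ℝ) : 0 ≤ stdPdf y := by
  unfold stdPdf; positivity

lemma stdPdf_le (y : ℝ) : stdPdf y ≤ 1 := by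
  unfold stdPdf
  rw [div_le_one (by positivity)]
  calc Real.exp (-y ^ 2 / 2) ≤ 1 := by
        rw [Real.exp_le_one_iff]
        nlinarith [sq_nonneg y]
    _ ≤ Real.sqrt (2 * Real.pi) := by
        rw [show (1:ℝ) = Real.sqrt 1 by simp]
        exact Real.sqrt_le_sqrt (by nlinarith [Real.pi_gt_three])

lemma stdPdf_eq (y : ℝ) : stdPdf y = Real.exp (-(1/2) * y ^ 2) * (Real.sqrt (2 * Real.pi))⁻¹ := by
  unfold stdPdf; rw [div_eq_mul_inv]; ring_nf

lemma stdPdf_integrable : Integrable stdPdf := by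
  have h := (integrable_exp_neg_mul_sq (by norm_num : (0:ℝ) < 1/2)).mul_const (Real.sqrt (2 * Real.pi))⁻¹
  exact h.congr (by filter_upwards with y using (stdPdf_eq y).symm)

lemma stdPdf_integral : ∫ y, stdPdf y = 1 := by
  have h : ∫ y, stdPdf y = (∫ y : ℝ, Real.exp (-(1/2) * y ^ 2)) * (Real.sqrt (2 * Real.pi))⁻¹ := by
    rw [← integral_mul_const]
    exact integral_congr_ae (by filter_upwards with y using stdPdf_eq y)
  rw [h, integral_gaussian]
  rw [show Real.pi / (1/2) = 2 * Real.pi by ring]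
  rw [mul_inv_cancel₀ (by positivity)]

lemma stdCdf_eq (x : ℝ) : stdCdf x = ∫ y in Set.Iic x, stdPdf y := rfl

lemma stdCdf_nonneg (x : ℝ) : 0 ≤ stdCdf x := by
  rw [stdCdf_eq]
  exact setIntegral_nonneg measurableSet_Iic fun y _ => stdPdf_nonneg y

lemma stdCdf_le_one (x : ℝ) : stdCdf x ≤ 1 := by
  rw [stdCdf_eq, ← stdPdf_integral]
  exact setIntegral_le_integral stdPdf_integrable (by filter_upwards with y using stdPdf_nonneg y)

lemma stdCdf_neg (x : ℝ) : stdCdf (-x) = 1 - stdCdf x := by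
  have h1 : stdCdf (-x) = ∫ y in Set.Ioi x, stdPdf y := by
    rw [stdCdf_eq, ← integral_comp_neg_Ioi]
    refine setIntegral_congr_fun measurableSet_Ioi fun y _ => ?_
    unfold stdPdf; ring_nf
  have h2 : stdCdf x + stdCdf (-x) = 1 := by
    rw [h1, stdCdf_eq, ← stdPdf_integral]
    rw [← integral_add_compl measurableSet_Iic stdPdf_integrable]
    congr 1
    simp [compl_Iic]
  linarith

lemma stdCdf_zero : stdCdf 0 = 1/2 := by
  have := stdCdf_neg 0
  rw [neg_zero] at this
  linarith

lemma hasDerivAt_stdCdf (x : ℝ) : HasDerivAt stdCdf (stdPdf x) x := by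
  have key : ∀ z : ℝ, stdCdf z = stdCdf 0 + ∫ y in (0:ℝ)..z, stdPdf y := by
    intro z
    rw [stdCdf_eq, stdCdf_eq, ← intervalIntegral.integral_Iic_sub_Iic
      stdPdf_integrable.integrableOn stdPdf_integrable.integrableOn]
    ring
  have hd : HasDerivAt (fun z => stdCdf 0 + ∫ y in (0:ℝ)..z, stdPdf y) (stdPdf x) x := by
    refine HasDerivAt.const_add _ ?_
    exact intervalIntegral.integral_hasDerivAt_right
      stdPdf_integrable.intervalIntegrable
      (stdPdf_continuous.stronglyMeasurableAtFilter _ _)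
      stdPdf_continuous.continuousAt
  exact hd.congr_of_eventuallyEq (by filter_upwards with z using key z)

lemma continuous_stdCdf : Continuous stdCdf :=
  continuous_iff_continuousAt.2 fun x => (hasDerivAt_stdCdf x).continuousAt

/-- European put value with strike `K_T` under Black–Scholes. -/
noncomputable def VeStrike (r σ T KT t x : ℝ) : ℝ :=
  KT * Real.exp (-r * (T - t)) *
    stdCdf ((Real.log (KT / x) - (r - σ ^ 2 / 2) * (T - t)) / (σ * Real.sqrt (T - t)))
  - x * stdCdf ((Real.log (KT / x) - (r + σ ^ 2 / 2) * (T - t)) / (σ * Real.sqrt (T - t)))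

/-- Exercise boundary `b(t) = K_T·e^{−γ(T−t)}` with `γ = m + r − σ²/2`. -/
noncomputable def bndStrikeM (m r σ T KT t : ℝ) : ℝ :=
  KT * Real.exp (-(m + r - σ ^ 2 / 2) * (T - t))

theorem strike_linear_volterra_equivalence (r σ T KT m : ℝ)
    (hr : 0 < r) (hσ : 0 < σ) (hT : 0 < T) (hKT : 0 < KT)
    (K K' : ℝ → ℝ)
    (hKcont : ContinuousOn K (Set.Icc 0 T))
    (hKT' : K T = KT)
    (hKderiv : ∀ u ∈ Set.Ico 0 T, HasDerivAt K (K' u) u)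
    (hK'cont : ContinuousOn K' (Set.Ico 0 T))
    (hint : IntegrableOn (fun u => Real.exp (-r * u) * K' u) (Set.Ioo 0 T)) :
    (∀ t, 0 ≤ t → t < T →
      K t - bndStrikeM m r σ T KT t
        = VeStrike r σ T KT t (bndStrikeM m r σ T KT t)
          + ∫ u in t..T, Real.exp (-r * (u - t)) * (r * K u - K' u) *
              stdCdf (m / σ * Real.sqrt (u - t)))
    ↔
    (∀ t, 0 ≤ t → t < T →
      K t = 2 * KT * Real.exp (-(m + r - σ ^ 2 / 2) * (T - t)) *
              stdCdf (-(m / σ - σ) * Real.sqrt (T - t))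
            + m / (σ * Real.sqrt (2 * Real.pi)) *
              ∫ u in t..T, Real.exp (-(r + m ^ 2 / (2 * σ ^ 2)) * (u - t)) * K u /
                Real.sqrt (u - t)) := by
  refine forall_congr' fun t => forall_congr' fun ht => forall_congr' fun htT => ?_
  have hτ : 0 < T - t := sub_pos.2 htT
  have hsτ : 0 < Real.sqrt (T - t) := Real.sqrt_pos.2 hτ
  have hs2π : Real.sqrt (2 * Real.pi) ≠ 0 := by positivity
  -- simplification of VeStrike at the boundary
  have hlog : Real.log (KT / (KT * Real.exp (-(m + r - σ ^ 2 / 2) * (T - t))))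
      = (m + r - σ ^ 2 / 2) * (T - t) := by
    rw [show KT / (KT * Real.exp (-(m + r - σ ^ 2 / 2) * (T - t)))
        = Real.exp ((m + r - σ ^ 2 / 2) * (T - t)) by
      rw [neg_mul, Real.exp_neg]; field_simp, Real.log_exp]
  have hss : Real.sqrt (T - t) * Real.sqrt (T - t) = T - t :=
    Real.mul_self_sqrt hτ.le
  have harg1 : ((m + r - σ ^ 2 / 2) * (T - t) - (r - σ ^ 2 / 2) * (T - t))
      / (σ * Real.sqrt (T - t)) = m / σ * Real.sqrt (T - t) := by
    rw [div_eq_iff (by positivity)]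
    field_simp
    linear_combination (-2*m) * hss
  have harg2 : ((m + r - σ ^ 2 / 2) * (T - t) - (r + σ ^ 2 / 2) * (T - t))
      / (σ * Real.sqrt (T - t)) = (m / σ - σ) * Real.sqrt (T - t) := by
    rw [div_eq_iff (by positivity)]
    field_simp
    linear_combination (2*σ^2 - 2*m) * hss
  have hVe : VeStrike r σ T KT t (bndStrikeM m r σ T KT t)
      = KT * Real.exp (-r * (T - t)) * stdCdf (m / σ * Real.sqrt (T - t))
        - KT * Real.exp (-(m + r - σ ^ 2 / 2) * (T - t)) *
            stdCdf ((m / σ - σ) * Real.sqrt (T - t)) := by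
    simp only [VeStrike, bndStrikeM]
    rw [hlog, harg1, harg2]
  have hneg : stdCdf (-(m / σ - σ) * Real.sqrt (T - t))
      = 1 - stdCdf ((m / σ - σ) * Real.sqrt (T - t)) := by
    rw [neg_mul]; exact stdCdf_neg _
  have hibp : (∫ u in t..T, Real.exp (-r * (u - t)) * (r * K u - K' u) *
        stdCdf (m / σ * Real.sqrt (u - t)))
      = K t / 2 - Real.exp (-r * (T - t)) * KT * stdCdf (m / σ * Real.sqrt (T - t))
        + m / (2 * (σ * Real.sqrt (2 * Real.pi))) *
          ∫ u in t..T, Real.exp (-(r + m ^ 2 / (2 * σ ^ 2)) * (u - t)) * K u /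
            Real.sqrt (u - t) := by
    have hsub : Set.Ioc t T ⊆ Set.Icc 0 T := fun u hu => ⟨le_trans ht (le_of_lt hu.1), hu.2⟩
    have hIccsub : Set.Icc t T ⊆ Set.Icc 0 T := fun u hu => ⟨le_trans ht hu.1, hu.2⟩
    obtain ⟨M, hM⟩ : ∃ M, ∀ u ∈ Set.Icc 0 T, ‖K u‖ ≤ M :=
      isCompact_Icc.exists_bound_of_continuousOn hKcont
    have hM0 : 0 ≤ M := le_trans (norm_nonneg _) (hM 0 ⟨le_refl 0, hT.le⟩)
    have hNcont : Continuous (fun u => stdCdf (m / σ * Real.sqrt (u - t))) :=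
      continuous_stdCdf.comp (by fun_prop)
    -- integrability of the singular kernel integrand
    have hψmeas : ContinuousOn (fun u => Real.exp (-(r + m ^ 2 / (2 * σ ^ 2)) * (u - t)) * K u
        / Real.sqrt (u - t)) (Set.Ioc t T) := by
      apply ContinuousOn.div
      · exact (Continuous.continuousOn (by fun_prop)).mul (hKcont.mono hsub)
      · fun_prop
      · intro u hu
        exact ne_of_gt (Real.sqrt_pos.2 (sub_pos.2 hu.1))
    have hrint : IntervalIntegrable (fun u => M * ((u - t) ^ (-(1/2) : ℝ))) volume t T := by
      have h0 : IntervalIntegrable (fun x : ℝ => x ^ (-(1/2) : ℝ)) volume 0 (T - t) :=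
        intervalIntegral.intervalIntegrable_rpow' (by norm_num)
      have h1 := (h0.comp_sub_right t).const_mul M
      simpa using h1
    have hψint : IntervalIntegrable (fun u => Real.exp (-(r + m ^ 2 / (2 * σ ^ 2)) * (u - t)) * K u
        / Real.sqrt (u - t)) volume t T := by
      rw [intervalIntegrable_iff_integrableOn_Ioc_of_le htT.le]
      apply Integrable.mono' ((intervalIntegrable_iff_integrableOn_Ioc_of_le htT.le).1 hrint)
        (hψmeas.aestronglyMeasurable measurableSet_Ioc)
      refine (ae_restrict_iff' measurableSet_Ioc).2 (ae_of_all _ fun u hu => ?_)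
      have hut : 0 < u - t := sub_pos.2 hu.1
      have hsu : 0 < Real.sqrt (u - t) := Real.sqrt_pos.2 hut
      have hpow : (u - t) ^ (-(1/2) : ℝ) = (Real.sqrt (u - t))⁻¹ := by
        rw [Real.rpow_neg hut.le, Real.sqrt_eq_rpow]
      have he : Real.exp (-(r + m ^ 2 / (2 * σ ^ 2)) * (u - t)) ≤ 1 := by
        rw [Real.exp_le_one_iff]
        have h1 : 0 ≤ (r + m ^ 2 / (2 * σ ^ 2)) * (u - t) := by positivity
        linarith
      have hKu : |K u| ≤ M := hM u (hsub hu)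
      rw [Real.norm_eq_abs, abs_div, abs_mul, abs_of_nonneg (Real.exp_nonneg _),
        abs_of_nonneg (Real.sqrt_nonneg _), hpow, div_eq_mul_inv]
      have hinv : 0 ≤ (Real.sqrt (u - t))⁻¹ := by positivity
      have h1 : Real.exp (-(r + m ^ 2 / (2 * σ ^ 2)) * (u - t)) * |K u| ≤ M := by
        nlinarith [abs_nonneg (K u), Real.exp_nonneg (-(r + m ^ 2 / (2 * σ ^ 2)) * (u - t))]
      exact mul_le_mul_of_nonneg_right h1 hinv
    -- integrability of the Volterra integrand
    have hp1 : IntervalIntegrable (fun u => Real.exp (-r * (u - t)) * (r * K u) *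
        stdCdf (m / σ * Real.sqrt (u - t))) volume t T := by
      apply ContinuousOn.intervalIntegrable
      rw [Set.uIcc_of_le htT.le]
      exact (((Continuous.continuousOn (by fun_prop)).mul
        (continuousOn_const.mul (hKcont.mono hIccsub)))).mul hNcont.continuousOn
    have hIoc : IntegrableOn (fun u => Real.exp (-r * u) * K' u) (Set.Ioc t T) := by
      refine (hint.mono_set (show Set.Ioo t T ⊆ Set.Ioo 0 T from fun u hu => ⟨lt_of_le_of_lt ht hu.1, hu.2⟩)).congr_set_ae ?_
      exact (Ioo_ae_eq_Ioc (a := t) (b := T)).symm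
    have hp2 : IntervalIntegrable (fun u => Real.exp (-r * (u - t)) * K' u *
        stdCdf (m / σ * Real.sqrt (u - t))) volume t T := by
      rw [intervalIntegrable_iff_integrableOn_Ioc_of_le htT.le]
      have hb := hIoc.bdd_mul (c := Real.exp (r * t)) (f := fun u => Real.exp (r * t) * stdCdf (m / σ * Real.sqrt (u - t)))
        ((continuous_const.mul hNcont).aestronglyMeasurable)
        (ae_of_all _ fun u => by
          rw [Real.norm_eq_abs, abs_mul, abs_of_nonneg (Real.exp_nonneg _),
            abs_of_nonneg (stdCdf_nonneg _)]
          nlinarith [stdCdf_le_one (m / σ * Real.sqrt (u - t)),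
            stdCdf_nonneg (m / σ * Real.sqrt (u - t)), Real.exp_pos (r * t)])
      refine hb.congr (ae_of_all _ fun u => ?_)
      have hee : Real.exp (r * t) * Real.exp (-r * u) = Real.exp (-r * (u - t)) := by
        rw [← Real.exp_add]; ring_nf
      show Real.exp (r * t) * stdCdf (m / σ * Real.sqrt (u - t)) * (Real.exp (-r * u) * K' u)
        = Real.exp (-r * (u - t)) * K' u * stdCdf (m / σ * Real.sqrt (u - t))
      rw [← hee]; ring
    have hφint : IntervalIntegrable (fun u => Real.exp (-r * (u - t)) * (r * K u - K' u) *
        stdCdf (m / σ * Real.sqrt (u - t))) volume t T := by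
      refine (hp1.sub hp2).congr_ae (ae_of_all _ fun u => by ring)
    -- continuity of H
    have hHcont : ContinuousOn (fun u => Real.exp (-r * (u - t)) * K u *
        stdCdf (m / σ * Real.sqrt (u - t))) (Set.Icc t T) :=
      ((Continuous.continuousOn (by fun_prop)).mul (hKcont.mono hIccsub)).mul
        hNcont.continuousOn
    -- derivative of H on the open interval
    have hHderiv : ∀ u ∈ Set.Ioo t T, HasDerivAt (fun u => Real.exp (-r * (u - t)) * K u *
        stdCdf (m / σ * Real.sqrt (u - t)))
        (-(Real.exp (-r * (u - t)) * (r * K u - K' u) * stdCdf (m / σ * Real.sqrt (u - t)))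
          + m / (2 * (σ * Real.sqrt (2 * Real.pi))) *
            (Real.exp (-(r + m ^ 2 / (2 * σ ^ 2)) * (u - t)) * K u / Real.sqrt (u - t))) u := by
      intro u hu
      have hut : 0 < u - t := sub_pos.2 hu.1
      have hsu : 0 < Real.sqrt (u - t) := Real.sqrt_pos.2 hut
      have hA : HasDerivAt (fun u => Real.exp (-r * (u - t))) (Real.exp (-r * (u - t)) * (-r * 1)) u :=
        (((hasDerivAt_id u).sub_const t).const_mul (-r)).exp
      have hB : HasDerivAt K (K' u) u := hKderiv u ⟨le_trans ht hu.1.le, hu.2⟩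
      have hS : HasDerivAt (fun u => Real.sqrt (u - t)) (1 / (2 * Real.sqrt (u - t)) * 1) u :=
        (Real.hasDerivAt_sqrt (ne_of_gt hut)).comp u ((hasDerivAt_id u).sub_const t)
      have hG : HasDerivAt (fun u => m / σ * Real.sqrt (u - t))
          (m / σ * (1 / (2 * Real.sqrt (u - t)) * 1)) u := hS.const_mul (m / σ)
      have hN : HasDerivAt (fun u => stdCdf (m / σ * Real.sqrt (u - t)))
          (stdPdf (m / σ * Real.sqrt (u - t)) * (m / σ * (1 / (2 * Real.sqrt (u - t)) * 1))) u :=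
        (hasDerivAt_stdCdf _).comp u hG
      have hD := (hA.mul hB).mul hN
      convert hD using 1
      · rfl
      · rfl
      · rfl
      have hpdf : stdPdf (m / σ * Real.sqrt (u - t))
          = Real.exp (-(m ^ 2 / σ ^ 2 * (u - t)) / 2) / Real.sqrt (2 * Real.pi) := by
        unfold stdPdf
        rw [mul_pow, div_pow, Real.sq_sqrt hut.le]
      have hexp : Real.exp (-(r + m ^ 2 / (2 * σ ^ 2)) * (u - t))
          = Real.exp (-r * (u - t)) * Real.exp (-(m ^ 2 / σ ^ 2 * (u - t)) / 2) := by
        rw [← Real.exp_add]; congr 1; field_simp; ring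
      rw [hpdf, hexp]
      simp only [Pi.mul_apply]
      field_simp
      ring
    -- FTC
    have hφneg : IntervalIntegrable (fun u => -(Real.exp (-r * (u - t)) * (r * K u - K' u) *
        stdCdf (m / σ * Real.sqrt (u - t)))) volume t T := hφint.neg
    have hcψ : IntervalIntegrable (fun u => m / (2 * (σ * Real.sqrt (2 * Real.pi))) *
        (Real.exp (-(r + m ^ 2 / (2 * σ ^ 2)) * (u - t)) * K u / Real.sqrt (u - t)))
        volume t T := hψint.const_mul _
    have hFTC := intervalIntegral.integral_eq_sub_of_hasDeriv_right_of_le htT.le hHcont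
      (fun u hu => (hHderiv u hu).hasDerivWithinAt) (hφneg.add hcψ)
    rw [intervalIntegral.integral_add hφneg hcψ, intervalIntegral.integral_neg,
      intervalIntegral.integral_const_mul] at hFTC
    have hHT : Real.exp (-r * (T - t)) * K T * stdCdf (m / σ * Real.sqrt (T - t))
        = Real.exp (-r * (T - t)) * KT * stdCdf (m / σ * Real.sqrt (T - t)) := by rw [hKT']
    have hHt : Real.exp (-r * (t - t)) * K t * stdCdf (m / σ * Real.sqrt (t - t)) = K t / 2 := by
      simp [stdCdf_zero]; ring
    linear_combination -hFTC - hHT + hHt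
  constructor
  · intro h
    rw [hVe] at h
    simp only [bndStrikeM] at h
    rw [hneg]
    linear_combination 2 * h + 2 * hibp
  · intro h
    rw [hVe]
    simp only [bndStrikeM]
    rw [hneg] at h
    linear_combination h / 2 - hibp
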